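/- Let T = τμ be a k-current with finite mass on an open set Ω ⊆ ℝⁿ and let D be a k-distribution of class C⁰ on Ω. Then there exists a Borel set N ⊆ Ω with μ(N) = 0 such that every point of Γ(τ, D)^{|τ|μ, 0} ∖ N belongs to Γ(τ, D); that is, every 0-superdensity point of the tangency set Γ(τ, D) with respect to the measure |τ|μ, outside the μ-null set N, lies in Γ(τ, D). -/

import Mathlib

open MeasureTheory Metric Filter ENNReal Topology

noncomputable section

/-- Euclidean `n`-space. -/
abbrev Euc (n : ℕ) := EuclideanSpace ℝ (Fin n)

/-- Coordinates of an element of the exterior algebra of `ℝⁿ` with respect to the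
standard basis `{e_s : s ⊆ {1,…,n}}`.  The degree-`k` part corresponds to the
coefficients indexed by sets of cardinality `k`, i.e. to `Λ_k(ℝⁿ)` (resp. `Λ^k(ℝⁿ)`). -/
abbrev MV (n : ℕ) := Finset (Fin n) → ℝ

namespace MV

variable {n : ℕ}

/-- `v` belongs to `Λ_k(ℝⁿ)` (equivalently `Λ^k(ℝⁿ)`): only coefficients of degree `k`
are nonzero. -/
def IsGrade (k : ℕ) (v : MV n) : Prop := ∀ s : Finset (Fin n), s.card ≠ k → v s = 0

/-- The duality pairing `⟨ζ; α⟩ := Σ_i ζ_i α_i`. -/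
def pair (v w : MV n) : ℝ := ∑ s : Finset (Fin n), v s * w s

/-- The sign `(-1)^{#{(a,b) ∈ s × t : b < a}}` showing up in the wedge product of basis
elements: `e_s ∧ e_t = sign s t • e_{s ∪ t}` for disjoint `s`, `t`. -/
def sign (s t : Finset (Fin n)) : ℝ :=
  (-1 : ℝ) ^ ((s ×ˢ t).filter fun p => p.2 < p.1).card

/-- The wedge product, in coordinates. -/
def wedge (v w : MV n) : MV n :=
  fun u => ∑ s ∈ u.powerset, sign s (u \ s) * v s * w (u \ s)

/-- The basis multivector `e_t` (resp. basis covector `dx_t`). -/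
def delta (t : Finset (Fin n)) : MV n := fun s => if s = t then 1 else 0

/-- Interior multiplication `ζ ⌟ α`, characterized by `⟨ζ ⌟ α; β⟩ = ⟨ζ; α ∧ β⟩`. -/
def imul (v a : MV n) : MV n := fun t => pair v (wedge a (delta t))

/-- The canonical embedding `ℝⁿ = Λ_1(ℝⁿ) ↪ Λ_•(ℝⁿ)`. -/
def embed (x : Euc n) : MV n := fun s => ∑ i : Fin n, if s = {i} then x i else 0

/-- The canonical identification of the degree-one part of `Λ_•(ℝⁿ)` with `ℝⁿ`. -/
def toVec (v : MV n) : Euc n := WithLp.toLp 2 fun i => v {i}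

/-- The wedge product `w 0 ∧ w 1 ∧ ⋯ ∧ w (k-1)` of a family of vectors of `ℝⁿ`. -/
def wedgeFam {k : ℕ} (w : Fin k → Euc n) : MV n :=
  (List.ofFn fun i => embed (w i)).foldr wedge (delta ∅)

/-- A `k`-vector is simple if it is a wedge product of `k` vectors of `ℝⁿ`. -/
def IsSimple (k : ℕ) (v : MV n) : Prop := ∃ w : Fin k → Euc n, v = wedgeFam w

/-- `span(v) := {v ⌟ α : α ∈ Λ^{k-1}(ℝⁿ)} ⊆ ℝⁿ`, for `v ∈ Λ_k(ℝⁿ)`. -/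
def spanSet (k : ℕ) (v : MV n) : Set (Euc n) :=
  {u | ∃ a : MV n, IsGrade (k - 1) a ∧ u = toVec (imul v a)}

/-- The (Euclidean) norm of a multivector. -/
def norm' (v : MV n) : ℝ := Real.sqrt (∑ s : Finset (Fin n), v s ^ 2)

/-- The exterior derivative of a (multi)covector field, in coordinates:
`(dψ)_u(x) = Σ_{i ∈ u} sign({i}, u \ {i}) ∂_i ψ_{u \ {i}}(x)`. -/
def extDeriv (ψ : Euc n → MV n) (x : Euc n) : MV n :=
  fun u => ∑ i ∈ u, sign {i} (u \ {i}) * fderiv ℝ ψ x (EuclideanSpace.single i 1) (u \ {i})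

end MV

/-- `x` is an `h`-superdensity point of `E` with respect to `λ`, i.e.
`λ(B_r(x) ∖ E) = λ(B_r(x))·o(r^h)` as `r → 0+`. -/
def SuperdensityPt {n : ℕ} (lam : Measure (Euc n)) (h : ℝ) (E : Set (Euc n)) (x : Euc n) :
    Prop :=
  ∀ ε > (0 : ℝ), ∃ r₀ > (0 : ℝ), ∀ r : ℝ, 0 < r → r < r₀ →
    lam (ball x r \ E) ≤ ENNReal.ofReal (ε * r ^ h) * lam (ball x r)

/-- The upper `s`-density `Θ^{*s}(μ, x) := limsup_{r→0+} μ(B_r(x))/(2r)^s`. -/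
def upperDensity {n : ℕ} (μ : Measure (Euc n)) (s : ℝ) (x : Euc n) : ℝ≥0∞ :=
  Filter.limsup (fun r : ℝ => μ (ball x r) / ENNReal.ofReal ((2 * r) ^ s)) (𝓝[>] 0)

/-- The lower `s`-density `Θ^s_*(μ, x) := liminf_{r→0+} μ(B_r(x))/(2r)^s`. -/
def lowerDensity {n : ℕ} (μ : Measure (Euc n)) (s : ℝ) (x : Euc n) : ℝ≥0∞ :=
  Filter.liminf (fun r : ℝ => μ (ball x r) / ENNReal.ofReal ((2 * r) ^ s)) (𝓝[>] 0)

/-- The upper derivative `D̄(λ, μ, x) := limsup_{r→0+} λ(B_r(x))/μ(B_r(x))`. -/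
def upperDeriv {n : ℕ} (lam μ : Measure (Euc n)) (x : Euc n) : ℝ≥0∞ :=
  Filter.limsup (fun r : ℝ => lam (ball x r) / μ (ball x r)) (𝓝[>] 0)

/-- The total variation `|τμ| = |τ|μ` of the current `T = τμ`. -/
def totalVar {n : ℕ} (τ : Euc n → MV n) (μ : Measure (Euc n)) : Measure (Euc n) :=
  μ.withDensity fun x => ENNReal.ofReal (MV.norm' (τ x))

/-- The Lebesgue-point conditions (3.2): the `μ`-averages of `τ` and of `|τ|` on `B_r(x)`
converge to `τ(x)` and `|τ(x)|` respectively, as `r → 0+`. -/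
def LebesguePt {n : ℕ} (μ : Measure (Euc n)) (τ : Euc n → MV n) (x : Euc n) : Prop :=
  Tendsto (fun r : ℝ => (μ (ball x r)).toReal⁻¹ • ∫ y in ball x r, τ y ∂μ)
    (𝓝[>] 0) (𝓝 (τ x)) ∧
  Tendsto (fun r : ℝ => (∫ y in ball x r, MV.norm' (τ y) ∂μ) / (μ (ball x r)).toReal)
    (𝓝[>] 0) (𝓝 (MV.norm' (τ x)))

/-- `K(τ, ω) := {y ∈ U : ⟨τ(y) ⌟ α; ω_y⟩ = 0 for all α ∈ Λ^{h-l}(ℝⁿ)}`, where `τ` is an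
`h`-vectorfield and `ω` a differential `l`-form on `U`. -/
def Kset {n : ℕ} (h l : ℕ) (U : Set (Euc n)) (τ : Euc n → MV n) (ω : Euc n → MV n) :
    Set (Euc n) :=
  {y ∈ U | ∀ a : MV n, MV.IsGrade (h - l) a → MV.pair (MV.imul (τ y) a) (ω y) = 0}

/-- `T = τμ` is a normal `h`-current on `Ω` with `∂T = τ'μ'` : both measures are finite,
`τ, τ'` are Borel and integrable, take values in `Λ_h` resp. `Λ_{h-1}`, and
`∫ ⟨τ'; ψ⟩ dμ' = ∫ ⟨τ; dψ⟩ dμ` for every smooth compactly supported `(h-1)`-form `ψ` on `Ω`. -/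
def IsNormalPair {n : ℕ} (h : ℕ) (Ω : Set (Euc n)) (μ μ' : Measure (Euc n))
    (τ τ' : Euc n → MV n) : Prop :=
  IsFiniteMeasure μ ∧ IsFiniteMeasure μ' ∧
  Measurable τ ∧ Measurable τ' ∧
  Integrable τ μ ∧ Integrable τ' μ' ∧
  (∀ x, MV.IsGrade h (τ x)) ∧ (∀ x, MV.IsGrade (h - 1) (τ' x)) ∧
  ∀ ψ : Euc n → MV n, ContDiff ℝ (⊤ : ℕ∞) ψ → HasCompactSupport ψ → tsupport ψ ⊆ Ω →
    (∀ y, MV.IsGrade (h - 1) (ψ y)) →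
    ∫ y, MV.pair (τ' y) (ψ y) ∂μ' = ∫ y, MV.pair (τ y) (MV.extDeriv ψ y) ∂μ

/-- `D` is a `k`-distribution of class `C^p` on `Ω`: each `D(x)` is a `k`-dimensional
subspace and, locally, `D` is the intersection of the kernels of `n - k` differential
1-forms of class `C^p` (the defining forms). -/
def IsDistribution {n : ℕ} (p : ℕ∞) (k : ℕ) (Ω : Set (Euc n))
    (D : Euc n → Submodule ℝ (Euc n)) : Prop :=
  (∀ x ∈ Ω, Module.finrank ℝ (D x) = k) ∧
  ∀ x ∈ Ω, ∃ U : Set (Euc n), U ⊆ Ω ∧ IsOpen U ∧ x ∈ U ∧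
    ∃ ω : Fin (n - k) → Euc n → (Euc n →L[ℝ] ℝ),
      (∀ j, ContDiffOn ℝ p (ω j) U) ∧
      ∀ y ∈ U, D y = ⨅ j, LinearMap.ker (ω j y : Euc n →ₗ[ℝ] ℝ)

/-- The tangency set `Γ(τ, D) := {x ∈ Ω : span(τ(x)) ⊆ D(x)}` of a `k`-vectorfield `τ`
with respect to a distribution `D`. -/
def tangencySet {n : ℕ} (k : ℕ) (Ω : Set (Euc n)) (τ : Euc n → MV n)
    (D : Euc n → Submodule ℝ (Euc n)) : Set (Euc n) :=
  {x ∈ Ω | MV.spanSet k (τ x) ⊆ (D x : Set (Euc n))}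

/-- A `C¹` `k`-distribution `D` is involutive at `x`: for some family of `C¹` defining
forms `ω⁽¹⁾, …, ω⁽ⁿ⁻ᵏ⁾` near `x`, each `(dω⁽ʲ⁾)_x` vanishes on `D(x) × D(x)`;
here `(dω)_x(u, v) = (Dω_x u)(v) − (Dω_x v)(u)`. -/
def InvolutiveAt {n : ℕ} (k : ℕ) (Ω : Set (Euc n)) (D : Euc n → Submodule ℝ (Euc n))
    (x : Euc n) : Prop :=
  ∃ U : Set (Euc n), U ⊆ Ω ∧ IsOpen U ∧ x ∈ U ∧
    ∃ ω : Fin (n - k) → Euc n → (Euc n →L[ℝ] ℝ),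
      (∀ j, ContDiffOn ℝ 1 (ω j) U) ∧
      (∀ y ∈ U, D y = ⨅ j, LinearMap.ker (ω j y : Euc n →ₗ[ℝ] ℝ)) ∧
      ∀ j, ∀ u ∈ D x, ∀ v ∈ D x, fderiv ℝ (ω j) x u v = fderiv ℝ (ω j) x v u

namespace Aux
variable {n : ℕ}

/-- `v ↦ toVec (v ⌟ a)` as a linear map. -/
def Lmap (a : MV n) : MV n →ₗ[ℝ] Euc n where
  toFun v := MV.toVec (MV.imul v a)
  map_add' u v := by
    ext i
    simp [MV.toVec, MV.imul, MV.pair, add_mul, Finset.sum_add_distrib]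
  map_smul' c v := by
    ext i
    simp [MV.toVec, MV.imul, MV.pair, Finset.mul_sum, mul_assoc]

def Lclm (a : MV n) : MV n →L[ℝ] Euc n := (Lmap a).toContinuousLinearMap

lemma Lclm_apply (a v : MV n) : Lclm a v = MV.toVec (MV.imul v a) := rfl

lemma norm'_eq (v : MV n) : MV.norm' v = ‖(WithLp.equiv 2 (Finset (Fin n) → ℝ)).symm v‖ := by
  simp [MV.norm', EuclideanSpace.norm_eq, Real.norm_eq_abs, sq_abs]

lemma norm'_nonneg (v : MV n) : 0 ≤ MV.norm' v := Real.sqrt_nonneg _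

def c0 (n : ℕ) : ℝ := Real.sqrt (Fintype.card (Finset (Fin n)))

lemma c0_nonneg : 0 ≤ c0 n := Real.sqrt_nonneg _

lemma norm'_le (v : MV n) : MV.norm' v ≤ c0 n * ‖v‖ := by
  have h1 : ∑ s : Finset (Fin n), v s ^ 2 ≤ ∑ _s : Finset (Fin n), ‖v‖ ^ 2 := by
    apply Finset.sum_le_sum
    intro s _
    calc v s ^ 2 = |v s| ^ 2 := (sq_abs _).symm
      _ ≤ ‖v‖ ^ 2 := by
        have : |v s| ≤ ‖v‖ := by
          simpa [Real.norm_eq_abs] using norm_le_pi_norm v s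
        gcongr
  calc MV.norm' v ≤ Real.sqrt (∑ _s : Finset (Fin n), ‖v‖ ^ 2) := Real.sqrt_le_sqrt h1
    _ = c0 n * ‖v‖ := by
      rw [Finset.sum_const, Finset.card_univ, nsmul_eq_mul, Real.sqrt_mul (by positivity),
        Real.sqrt_sq (norm_nonneg v)]
      rfl

lemma norm'_triangle (u w : MV n) : MV.norm' u ≤ MV.norm' w + MV.norm' (u - w) := by
  rw [norm'_eq, norm'_eq, norm'_eq]
  exact norm_le_norm_add_norm_sub' _ _

lemma pi_norm_le_norm' (v : MV n) : ‖v‖ ≤ MV.norm' v := by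
  apply pi_norm_le_iff_of_nonneg (norm'_nonneg v) |>.2
  intro s
  rw [Real.norm_eq_abs, MV.norm', ← Real.sqrt_sq_eq_abs]
  apply Real.sqrt_le_sqrt
  exact Finset.single_le_sum (f := fun s => v s ^ 2) (fun t _ => sq_nonneg _) (Finset.mem_univ s)

lemma continuous_norm' : Continuous (MV.norm' (n := n)) := by
  unfold MV.norm'
  fun_prop

lemma null_B2 (μ : Measure (Euc n)) :
    μ {x : Euc n | ∃ r > (0:ℝ), μ (ball x r) = 0} = 0 := by
  set S : Set (Set (Euc n)) := {u | IsOpen u ∧ μ u = 0} with hS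
  obtain ⟨T, hTc, hTS, hTU⟩ := TopologicalSpace.isOpen_sUnion_countable S (fun u hu => hu.1)
  have h0 : μ (⋃₀ T) = 0 := by
    rw [measure_sUnion_null_iff hTc]
    exact fun s hs => (hTS hs).2
  apply measure_mono_null _ (hTU ▸ h0)
  rintro x ⟨r, hr, hr0⟩
  exact ⟨ball x r, ⟨isOpen_ball, hr0⟩, mem_ball_self hr⟩

/-- Lebesgue differentiation for closed balls. -/
lemma leb_pts (μ : Measure (Euc n)) [IsFiniteMeasure μ] {E : Type*} [NormedAddCommGroup E]
    {f : Euc n → E} (hf : Integrable f μ) :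
    ∀ᵐ x ∂μ, Tendsto (fun r => ⨍ y in closedBall x r, ‖f y - f x‖ ∂μ) (𝓝[>] 0) (𝓝 0) := by
  filter_upwards [VitaliFamily.ae_tendsto_average_norm_sub (Besicovitch.vitaliFamily μ)
    hf.locallyIntegrable] with x hx
  exact hx.comp (Besicovitch.tendsto_filterAt μ x)

variable {μ : Measure (Euc n)} {τ : Euc n → MV n}

lemma totalVar_finite [IsFiniteMeasure μ] (hτi : Integrable τ μ) :
    IsFiniteMeasure (totalVar τ μ) := by
  constructor
  rw [totalVar, withDensity_apply _ MeasurableSet.univ, setLIntegral_univ]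
  calc ∫⁻ y, ENNReal.ofReal (MV.norm' (τ y)) ∂μ
      ≤ ∫⁻ y, ENNReal.ofReal (c0 n) * (‖τ y‖₊ : ℝ≥0∞) ∂μ := by
        apply lintegral_mono
        intro y
        simp only [← enorm_eq_nnnorm]
        rw [← ofReal_norm_eq_enorm, ← ENNReal.ofReal_mul c0_nonneg]
        exact ENNReal.ofReal_le_ofReal (norm'_le _)
    _ = ENNReal.ofReal (c0 n) * ∫⁻ y, (‖τ y‖₊ : ℝ≥0∞) ∂μ := lintegral_const_mul' _ _ ofReal_ne_top
    _ < ⊤ := ENNReal.mul_lt_top ofReal_lt_top hτi.2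

lemma totalVar_toReal (hτm : Measurable τ) {S : Set (Euc n)} (hS : MeasurableSet S) :
    (totalVar τ μ S).toReal = ∫ y in S, MV.norm' (τ y) ∂μ := by
  rw [totalVar, withDensity_apply _ hS,
    integral_eq_lintegral_of_nonneg_ae (Eventually.of_forall fun y => norm'_nonneg _)
      ((continuous_norm'.measurable.comp hτm).aestronglyMeasurable)]


lemma sd_closedBall [IsFiniteMeasure μ] (hτi : Integrable τ μ) {Γ : Set (Euc n)} {x : Euc n}
    (hsd : SuperdensityPt (totalVar τ μ) 0 Γ x) {ε : ℝ} (hε : 0 < ε) :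
    ∃ r₀ > (0:ℝ), ∀ r, 0 < r → r < r₀ →
      totalVar τ μ (closedBall x r \ (toMeasurable (totalVar τ μ) Γᶜ)ᶜ)
        ≤ ENNReal.ofReal ε * totalVar τ μ (closedBall x r) := by
  set lam := totalVar τ μ with hlam
  haveI : IsFiniteMeasure lam := totalVar_finite hτi
  obtain ⟨r₀, hr₀, H⟩ := hsd ε hε
  refine ⟨r₀ / 2, by positivity, fun r hr hrr => ?_⟩
  have hA : lam (closedBall x r \ (toMeasurable lam Γᶜ)ᶜ) = lam (closedBall x r \ Γ) := by
    have h1 : closedBall x r \ (toMeasurable lam Γᶜ)ᶜ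
        = toMeasurable lam Γᶜ ∩ closedBall x r := by
      rw [Set.diff_eq, compl_compl, Set.inter_comm]
    have h2 : closedBall x r \ Γ = Γᶜ ∩ closedBall x r := by rw [Set.diff_eq, Set.inter_comm]
    rw [h1, h2, Measure.measure_toMeasurable_inter measurableSet_closedBall (measure_ne_top lam _)]
  rw [hA]
  set s : ℕ → Set (Euc n) := fun m => ball x (r + 1 / (m + 1)) with hs
  have hanti : Antitone s := by
    intro a b hab
    apply ball_subset_ball
    have h1 : ((a:ℝ)+1) ≤ (b:ℝ)+1 := by
      have := (Nat.cast_le (α := ℝ)).2 hab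
      linarith
    have : (1:ℝ) / (b + 1) ≤ 1 / (a + 1) := one_div_le_one_div_of_le (by positivity) h1
    linarith
  have hiInter : ⋂ m, s m = closedBall x r := by
    ext y
    simp only [Set.mem_iInter, hs, mem_ball, mem_closedBall]
    constructor
    · intro h
      by_contra hc
      push_neg at hc
      obtain ⟨m, hm⟩ := exists_nat_one_div_lt (sub_pos.2 hc)
      have := h m
      linarith
    · intro h m
      have : (0:ℝ) < 1 / ((m:ℝ) + 1) := by positivity
      linarith
  have hlim : Tendsto (fun m => ENNReal.ofReal ε * lam (s m)) atTop
      (𝓝 (ENNReal.ofReal ε * lam (closedBall x r))) := by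
    rw [← hiInter]
    exact ENNReal.Tendsto.const_mul (tendsto_measure_iInter_atTop
      (fun m => isOpen_ball.measurableSet.nullMeasurableSet) hanti
      ⟨0, measure_ne_top _ _⟩) (Or.inr ofReal_ne_top)
  apply ge_of_tendsto hlim
  obtain ⟨M, hM⟩ := exists_nat_one_div_lt (show (0:ℝ) < r₀ - r by linarith)
  filter_upwards [eventually_ge_atTop M] with m hm
  have hδ : (1:ℝ) / ((m:ℝ) + 1) ≤ 1 / ((M:ℝ) + 1) := by
    apply one_div_le_one_div_of_le (by positivity)
    have := (Nat.cast_le (α := ℝ)).2 hm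
    linarith
  have hδ0 : (0:ℝ) < 1 / ((m:ℝ) + 1) := by positivity
  have hrm : r + 1 / ((m:ℝ) + 1) < r₀ := by linarith
  have hsub : closedBall x r \ Γ ⊆ s m \ Γ :=
    Set.diff_subset_diff_left (closedBall_subset_ball (by linarith))
  calc lam (closedBall x r \ Γ) ≤ lam (s m \ Γ) := measure_mono hsub
    _ ≤ ENNReal.ofReal (ε * (r + 1 / ((m:ℝ) + 1)) ^ (0:ℝ)) * lam (s m) :=
        H _ (by positivity) hrm
    _ = ENNReal.ofReal ε * lam (s m) := by
        rw [Real.rpow_zero, mul_one]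


set_option maxHeartbeats 2000000 in
lemma key [IsFiniteMeasure μ] (hτm : Measurable τ) (hτi : Integrable τ μ)
    {G : Set (Euc n)} (hG : MeasurableSet G)
    {U : Set (Euc n)} (hU : IsOpen U)
    {ω : Euc n → (Euc n →L[ℝ] ℝ)} (hω : ContinuousOn ω U)
    {L : MV n →L[ℝ] Euc n}
    (hzero : ∀ y, y ∈ G → y ∈ U → ω y (L (τ y)) = 0)
    {x : Euc n} (hxU : x ∈ U)
    (hx1 : Tendsto (fun r => ⨍ y in closedBall x r, ‖τ y - τ x‖ ∂μ) (𝓝[>] 0) (𝓝 0))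
    (hx2 : ∀ r, 0 < r → μ (ball x r) ≠ 0)
    (hsd : ∀ ε : ℝ, 0 < ε → ∃ r₀ > (0:ℝ), ∀ r, 0 < r → r < r₀ →
      totalVar τ μ (closedBall x r \ G) ≤ ENNReal.ofReal ε * totalVar τ μ (closedBall x r)) :
    ω x (L (τ x)) = 0 := by
  set lam := totalVar τ μ with hlam
  haveI : IsFiniteMeasure lam := totalVar_finite hτi
  set g : Euc n → ℝ := fun y => ω y (L (τ y)) with hg
  set M : ℝ := ‖ω x‖ + 1 with hM
  have hM0 : 0 < M := by positivity
  set K : ℝ := M * ‖L‖ + ‖L‖ * ‖τ x‖ + M * ‖L‖ * (MV.norm' (τ x) + c0 n) + 1 with hK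
  have hK0 : 0 < K := by
    have := norm'_nonneg (τ x)
    have := c0_nonneg (n := n)
    positivity
  have main : ∀ ε : ℝ, 0 < ε → ε ≤ 1 → |g x| ≤ ε * K := by
    intro ε hε hε1
    -- choose radius of continuity
    have hcont : {y | ‖ω y - ω x‖ ≤ ε} ∈ 𝓝 x := by
      have hc : ContinuousAt ω x := hω.continuousAt (hU.mem_nhds hxU)
      have h2 := hc (closedBall_mem_nhds (ω x) hε)
      filter_upwards [h2] with y hy
      simpa [mem_closedBall, dist_eq_norm] using hy
    obtain ⟨r1, hr1, hball⟩ :=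
      Metric.mem_nhds_iff.1 (Filter.inter_mem (hU.mem_nhds hxU) hcont)
    obtain ⟨r₀, hr₀, Hsd⟩ := hsd ε hε
    -- choose radius
    have hev : ∀ᶠ r in 𝓝[>] (0:ℝ),
        ((0:ℝ) < r ∧ r < min r1 r₀) ∧ ⨍ y in closedBall x r, ‖τ y - τ x‖ ∂μ ≤ ε := by
      have h1 : Set.Ioo (0:ℝ) (min r1 r₀) ∈ 𝓝[>] (0:ℝ) :=
        Ioo_mem_nhdsGT_of_mem ⟨le_refl _, lt_min hr1 hr₀⟩
      have h2 := hx1.eventually_le_const hε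
      filter_upwards [h1, h2] with r hr h2 using ⟨⟨hr.1, hr.2⟩, h2⟩
    obtain ⟨r, ⟨⟨hr, hrm⟩, hAr⟩⟩ := hev.exists
    have hrr1 : r < r1 := lt_of_lt_of_le hrm (min_le_left _ _)
    have hrr0 : r < r₀ := lt_of_lt_of_le hrm (min_le_right _ _)
    set s := closedBall x r with hs
    have hsmeas : MeasurableSet s := measurableSet_closedBall
    have hsU : ∀ y ∈ s, y ∈ U ∧ ‖ω y - ω x‖ ≤ ε := fun y hy =>
      hball (closedBall_subset_ball hrr1 hy)
    have hm0 : μ s ≠ 0 := by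
      intro h
      exact hx2 r hr (measure_mono_null ball_subset_closedBall h)
    set m : ℝ := (μ s).toReal with hm
    have hmpos : 0 < m := ENNReal.toReal_pos hm0 (measure_ne_top μ s)
    -- pointwise norm bounds
    have hωy : ∀ y ∈ s, ‖ω y‖ ≤ M := by
      intro y hy
      calc ‖ω y‖ = ‖ω x + (ω y - ω x)‖ := by
            congr 1
            abel
        _ ≤ ‖ω x‖ + ‖ω y - ω x‖ := norm_add_le _ _
        _ ≤ ‖ω x‖ + 1 := by linarith [(hsU y hy).2]
    have hgb : ∀ y ∈ s, |g y| ≤ M * ‖L‖ * MV.norm' (τ y) := by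
      intro y hy
      calc |g y| ≤ ‖ω y‖ * ‖L (τ y)‖ := (ω y).le_opNorm _
        _ ≤ ‖ω y‖ * (‖L‖ * ‖τ y‖) := by
            have := L.le_opNorm (τ y)
            have := norm_nonneg (ω y)
            nlinarith
        _ ≤ M * (‖L‖ * ‖τ y‖) := by
            have := hωy y hy
            have h1 : 0 ≤ ‖L‖ * ‖τ y‖ := by positivity
            nlinarith
        _ ≤ M * ‖L‖ * MV.norm' (τ y) := by
            have := pi_norm_le_norm' (τ y)
            have h1 : 0 ≤ M * ‖L‖ := by positivity
            nlinarith
    -- integrability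
    have hτs : IntegrableOn τ s μ := hτi.integrableOn
    have hτxc : IntegrableOn (fun _ => τ x) s μ :=
      integrableOn_const
    have hsubτ : IntegrableOn (fun y => ‖τ y - τ x‖) s μ := (hτs.sub hτxc).norm
    have hωAE : AEStronglyMeasurable ω (μ.restrict s) :=
      (hω.mono fun y hy => (hsU y hy).1).aestronglyMeasurable hsmeas
    have hgAE : AEStronglyMeasurable g (μ.restrict s) := by
      show AEStronglyMeasurable (fun y => (ω y) (L (τ y))) (μ.restrict s)
      exact isBoundedBilinearMap_apply.continuous.comp_aestronglyMeasurable₂ hωAE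
        ((L.continuous.comp_aestronglyMeasurable hτm.aestronglyMeasurable).restrict)
    have hn'AE : AEStronglyMeasurable (fun y => MV.norm' (τ y)) (μ.restrict s) :=
      (continuous_norm'.comp_aestronglyMeasurable hτm.aestronglyMeasurable).restrict
    have hn'i : IntegrableOn (fun y => MV.norm' (τ y)) s μ := by
      apply Integrable.mono' ((hτs.norm).const_mul (c0 n)) hn'AE
      filter_upwards [ae_restrict_mem hsmeas] with y _
      simpa [Real.norm_eq_abs, abs_of_nonneg (norm'_nonneg (τ y))] using norm'_le (τ y)
    have hgi : IntegrableOn g s μ := by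
      apply Integrable.mono' (hn'i.const_mul (M * ‖L‖)) hgAE
      filter_upwards [ae_restrict_mem hsmeas] with y hy
      simpa [Real.norm_eq_abs] using hgb y hy
    -- total variation facts
    have hlams : (lam s).toReal = ∫ y in s, MV.norm' (τ y) ∂μ := totalVar_toReal hτm hsmeas
    have hAvg : ∫ y in s, ‖τ y - τ x‖ ∂μ ≤ ε * m := by
      have h1 : ⨍ y in s, ‖τ y - τ x‖ ∂μ = m⁻¹ * ∫ y in s, ‖τ y - τ x‖ ∂μ := by
        rw [setAverage_eq]; simp [hm, smul_eq_mul, measureReal_def]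
      have h2 : (0:ℝ) ≤ ∫ y in s, ‖τ y - τ x‖ ∂μ :=
        integral_nonneg fun y => norm_nonneg _
      have h3 := hAr
      rw [hs] at h1 ⊢
      rw [h1] at h3
      calc ∫ y in closedBall x r, ‖τ y - τ x‖ ∂μ
          = m * (m⁻¹ * ∫ y in closedBall x r, ‖τ y - τ x‖ ∂μ) := by
            field_simp
        _ ≤ m * ε := by
            apply mul_le_mul_of_nonneg_left h3 hmpos.le
        _ = ε * m := mul_comm _ _
    have hlamsb : (lam s).toReal ≤ (MV.norm' (τ x) + c0 n) * m := by
      rw [hlams]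
      have h1 : ∀ y ∈ s, MV.norm' (τ y) ≤ MV.norm' (τ x) + c0 n * ‖τ y - τ x‖ := by
        intro y _
        have h2 := norm'_triangle (τ y) (τ x)
        have h3 := norm'_le (τ y - τ x)
        linarith
      calc ∫ y in s, MV.norm' (τ y) ∂μ
          ≤ ∫ y in s, (MV.norm' (τ x) + c0 n * ‖τ y - τ x‖) ∂μ :=
            setIntegral_mono_on hn'i
              ((integrableOn_const).add
                (hsubτ.const_mul (c0 n))) hsmeas h1
        _ = MV.norm' (τ x) * m + c0 n * ∫ y in s, ‖τ y - τ x‖ ∂μ := by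
            rw [integral_add (integrableOn_const : IntegrableOn (fun _ => MV.norm' (τ x)) s μ)
              (hsubτ.const_mul (c0 n)), setIntegral_const, integral_const_mul]
            simp only [hm, smul_eq_mul, measureReal_def]
            ring
        _ ≤ MV.norm' (τ x) * m + c0 n * (ε * m) := by
            have h9 := c0_nonneg (n := n)
            nlinarith [hAvg]
        _ ≤ (MV.norm' (τ x) + c0 n) * m := by
            have h10 : ε * m ≤ m := by nlinarith [mul_nonneg (sub_nonneg.2 hε1) hmpos.le]
            have h11 : c0 n * (ε * m) ≤ c0 n * m :=
              mul_le_mul_of_nonneg_left h10 (c0_nonneg (n := n))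
            linarith
    -- the integral of g over s
    have hIg : |∫ y in s, g y ∂μ| ≤ M * ‖L‖ * (ε * ((MV.norm' (τ x) + c0 n) * m)) := by
      have hsplit := integral_inter_add_diff (f := g) (s := s) (μ := μ) hG hgi
      have hz : ∫ y in s ∩ G, g y ∂μ = 0 :=
        setIntegral_eq_zero_of_forall_eq_zero fun y hy => hzero y hy.2 (hsU y hy.1).1
      have hdm : MeasurableSet (s \ G) := hsmeas.diff hG
      have hlamd : (lam (s \ G)).toReal ≤ ε * (lam s).toReal := by
        have h1 := Hsd r hr hrr0
        have h2 : (lam (s \ G)).toReal ≤ (ENNReal.ofReal ε * lam s).toReal := by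
          apply ENNReal.toReal_mono _ h1
          exact ENNReal.mul_ne_top ofReal_ne_top (measure_ne_top _ _)
        rwa [ENNReal.toReal_mul, ENNReal.toReal_ofReal hε.le] at h2
      have hlamd' : (lam (s \ G)).toReal = ∫ y in s \ G, MV.norm' (τ y) ∂μ :=
        totalVar_toReal hτm hdm
      calc |∫ y in s, g y ∂μ| = |∫ y in s \ G, g y ∂μ| := by rw [← hsplit, hz, zero_add]
        _ ≤ ∫ y in s \ G, |g y| ∂μ := by
            simpa [Real.norm_eq_abs] using
              norm_integral_le_integral_norm (μ := μ.restrict (s \ G)) g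
        _ ≤ ∫ y in s \ G, M * ‖L‖ * MV.norm' (τ y) ∂μ := by
            apply setIntegral_mono_on ((hgi.mono_set Set.diff_subset).abs)
              ((hn'i.mono_set Set.diff_subset).const_mul _) hdm
            exact fun y hy => hgb y hy.1
        _ = M * ‖L‖ * (lam (s \ G)).toReal := by rw [integral_const_mul, hlamd']
        _ ≤ M * ‖L‖ * (ε * (lam s).toReal) := by
            have h5 : 0 ≤ M * ‖L‖ := by positivity
            exact mul_le_mul_of_nonneg_left hlamd h5
        _ ≤ M * ‖L‖ * (ε * ((MV.norm' (τ x) + c0 n) * m)) := by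
            have h5 : 0 ≤ M * ‖L‖ := by positivity
            apply mul_le_mul_of_nonneg_left _ h5
            exact mul_le_mul_of_nonneg_left hlamsb hε.le
    -- pointwise difference estimate
    have hdiff : ∀ y ∈ s, |g y - g x| ≤ M * ‖L‖ * ‖τ y - τ x‖ + ε * (‖L‖ * ‖τ x‖) := by
      intro y hy
      have e1 : g y - g x = ω y (L (τ y) - L (τ x)) + (ω y - ω x) (L (τ x)) := by
        simp only [hg, map_sub, ContinuousLinearMap.sub_apply]
        ring
      rw [e1]
      have b1 : |ω y (L (τ y) - L (τ x))| ≤ M * ‖L‖ * ‖τ y - τ x‖ := by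
        calc |ω y (L (τ y) - L (τ x))| ≤ ‖ω y‖ * ‖L (τ y) - L (τ x)‖ := (ω y).le_opNorm _
          _ ≤ M * (‖L‖ * ‖τ y - τ x‖) := by
              have h1 : ‖L (τ y) - L (τ x)‖ ≤ ‖L‖ * ‖τ y - τ x‖ := by
                rw [← map_sub]
                exact L.le_opNorm _
              have h2 := hωy y hy
              have h3 := norm_nonneg (ω y)
              nlinarith [norm_nonneg (L (τ y) - L (τ x)), norm_nonneg (τ y - τ x),
                L.opNorm_nonneg]
          _ = M * ‖L‖ * ‖τ y - τ x‖ := by ring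
      have b2 : |(ω y - ω x) (L (τ x))| ≤ ε * (‖L‖ * ‖τ x‖) := by
        calc |(ω y - ω x) (L (τ x))| ≤ ‖ω y - ω x‖ * ‖L (τ x)‖ := (ω y - ω x).le_opNorm _
          _ ≤ ε * (‖L‖ * ‖τ x‖) := by
              have h1 := L.le_opNorm (τ x)
              have h2 := (hsU y hy).2
              have h3 := norm_nonneg (ω y - ω x)
              nlinarith [norm_nonneg (L (τ x))]
      calc |ω y (L (τ y) - L (τ x)) + (ω y - ω x) (L (τ x))|
          ≤ |ω y (L (τ y) - L (τ x))| + |(ω y - ω x) (L (τ x))| := abs_add_le _ _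
        _ ≤ M * ‖L‖ * ‖τ y - τ x‖ + ε * (‖L‖ * ‖τ x‖) := by linarith
    -- main chain
    have hconst : ∫ _ in s, g x ∂μ = m * g x := by
      rw [setIntegral_const]; simp [hm, smul_eq_mul, measureReal_def]
    have hdi : IntegrableOn (fun y => g y - g x) s μ :=
      hgi.sub (integrableOn_const)
    have hdi' : IntegrableOn (fun y => g x - g y) s μ :=
      (integrableOn_const).sub hgi
    have key1 : |g x| * m ≤ (∫ y in s, |g y - g x| ∂μ) + |∫ y in s, g y ∂μ| := by
      have e1 : (∫ y in s, (g x - g y) ∂μ) + (∫ y in s, g y ∂μ) = m * g x := by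
        rw [← integral_add hdi' hgi]
        simp only [sub_add_cancel]
        exact hconst
      have e2 : |g x| * m = |(∫ y in s, (g x - g y) ∂μ) + (∫ y in s, g y ∂μ)| := by
        rw [e1, abs_mul, abs_of_nonneg hmpos.le]
        ring
      rw [e2]
      have e3 : |∫ y in s, (g x - g y) ∂μ| ≤ ∫ y in s, |g y - g x| ∂μ := by
        calc |∫ y in s, (g x - g y) ∂μ| ≤ ∫ y in s, |g x - g y| ∂μ := by
              simpa [Real.norm_eq_abs] using
                norm_integral_le_integral_norm (μ := μ.restrict s) (fun y => g x - g y)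
          _ = ∫ y in s, |g y - g x| ∂μ := by simp_rw [abs_sub_comm]
      calc |(∫ y in s, (g x - g y) ∂μ) + (∫ y in s, g y ∂μ)|
          ≤ |∫ y in s, (g x - g y) ∂μ| + |∫ y in s, g y ∂μ| := abs_add_le _ _
        _ ≤ (∫ y in s, |g y - g x| ∂μ) + |∫ y in s, g y ∂μ| := by linarith
    have hint2 : ∫ y in s, |g y - g x| ∂μ ≤ M * ‖L‖ * (ε * m) + ε * (‖L‖ * ‖τ x‖) * m := by
      calc ∫ y in s, |g y - g x| ∂μ
          ≤ ∫ y in s, (M * ‖L‖ * ‖τ y - τ x‖ + ε * (‖L‖ * ‖τ x‖)) ∂μ :=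
            setIntegral_mono_on hdi.abs
              ((hsubτ.const_mul _).add (integrableOn_const))
              hsmeas hdiff
        _ = M * ‖L‖ * (∫ y in s, ‖τ y - τ x‖ ∂μ) + ε * (‖L‖ * ‖τ x‖) * m := by
            rw [integral_add (hsubτ.const_mul _)
              (integrableOn_const), integral_const_mul,
              setIntegral_const]
            simp only [hm, smul_eq_mul, measureReal_def]
            ring
        _ ≤ M * ‖L‖ * (ε * m) + ε * (‖L‖ * ‖τ x‖) * m := by
            have h5 : 0 ≤ M * ‖L‖ := by positivity
            nlinarith
    have hfinal : |g x| * m ≤ ε * K * m := by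
      have h6 : 0 ≤ MV.norm' (τ x) + c0 n := by
        have := norm'_nonneg (τ x); have := c0_nonneg (n := n); linarith
      have h7 : 0 ≤ M * ‖L‖ := by positivity
      calc |g x| * m ≤ (∫ y in s, |g y - g x| ∂μ) + |∫ y in s, g y ∂μ| := key1
        _ ≤ (M * ‖L‖ * (ε * m) + ε * (‖L‖ * ‖τ x‖) * m)
            + M * ‖L‖ * (ε * ((MV.norm' (τ x) + c0 n) * m)) := by linarith
        _ ≤ ε * K * m := by
            rw [hK]
            nlinarith [hmpos.le, hε.le, norm_nonneg L, norm_nonneg (τ x)]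
    exact le_of_mul_le_mul_right hfinal hmpos
  have habs : |g x| ≤ 0 := by
    by_contra hcon
    push_neg at hcon
    have hc2 : 0 < |g x| / (2 * K) := by positivity
    rcases le_total 1 (|g x| / (2 * K)) with hle | hle
    · have h1 := main 1 one_pos le_rfl
      have h2 : 2 * K ≤ |g x| := (one_le_div (by positivity)).1 hle
      linarith
    · have h1 := main _ hc2 hle
      have h3 : (|g x| / (2 * K)) * K = |g x| / 2 := by
        field_simp
      linarith
  exact abs_eq_zero.1 (le_antisymm habs (abs_nonneg _))

end Aux
/-- **Proposition 4.1.** Let `T = τμ` be a `k`-current with finite mass on `Ω` and `D` a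
`k`-distribution of class `C⁰` on `Ω`.  Then there is an `N ⊆ Ω` with `μ(N) = 0` such that
`Γ(τ,D)^{|τ|μ,0} ∖ N ⊆ Γ(τ,D)`. -/
theorem statement9 {n k : ℕ} (hk : 1 ≤ k) (hkn : k ≤ n)
    (Ω : Set (Euc n)) (hΩ : IsOpen Ω)
    (μ : Measure (Euc n)) [IsFiniteMeasure μ]
    (τ : Euc n → MV n) (hτm : Measurable τ) (hτi : Integrable τ μ)
    (hτg : ∀ x, MV.IsGrade k (τ x))
    (D : Euc n → Submodule ℝ (Euc n)) (hD : IsDistribution 0 k Ω D) :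
    ∃ N : Set (Euc n), MeasurableSet N ∧ μ N = 0 ∧
      ∀ x ∈ Ω, SuperdensityPt (totalVar τ μ) 0 (tangencySet k Ω τ D) x → x ∉ N →
        x ∈ tangencySet k Ω τ D := by
  classical
  have hfin : IsFiniteMeasure (totalVar τ μ) := Aux.totalVar_finite hτi
  set lam := totalVar τ μ with hlamdef
  set Γ := tangencySet k Ω τ D with hΓdef
  set B1 := {x : Euc n |
    ¬ Tendsto (fun r => ⨍ y in closedBall x r, ‖τ y - τ x‖ ∂μ) (𝓝[>] 0) (𝓝 0)} with hB1def
  set B2 := {x : Euc n | ∃ r > (0:ℝ), μ (ball x r) = 0} with hB2def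
  have hB1 : μ B1 = 0 := by
    have h := Aux.leb_pts μ hτi
    rw [ae_iff] at h
    exact h
  have hB2 : μ B2 = 0 := Aux.null_B2 μ
  refine ⟨toMeasurable μ (B1 ∪ B2), measurableSet_toMeasurable _ _, ?_, ?_⟩
  · rw [measure_toMeasurable]
    exact measure_union_null hB1 hB2
  intro x hxΩ hsd hxN
  have hxB : x ∉ B1 ∪ B2 := fun h => hxN (subset_toMeasurable _ _ h)
  have hx1 : Tendsto (fun r => ⨍ y in closedBall x r, ‖τ y - τ x‖ ∂μ) (𝓝[>] 0) (𝓝 0) := by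
    by_contra h
    exact hxB (Or.inl h)
  have hx2 : ∀ r : ℝ, 0 < r → μ (ball x r) ≠ 0 := by
    intro r hr h0
    exact hxB (Or.inr ⟨r, hr, h0⟩)
  obtain ⟨U, hUΩ, hUopen, hxU, ω, hωc, hωker⟩ := hD.2 x hxΩ
  refine ⟨hxΩ, ?_⟩
  rintro u ⟨a, ha, rfl⟩
  have hG : MeasurableSet ((toMeasurable lam Γᶜ)ᶜ) := (measurableSet_toMeasurable _ _).compl
  have hmem : MV.toVec (MV.imul (τ x) a) ∈ (⨅ j, LinearMap.ker (ω j x : Euc n →ₗ[ℝ] ℝ)) := by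
    rw [Submodule.mem_iInf]
    intro j
    rw [LinearMap.mem_ker]
    have hωcont : ContinuousOn (ω j) U := (hωc j).continuousOn
    have hzero : ∀ y, y ∈ (toMeasurable lam Γᶜ)ᶜ → y ∈ U →
        ω j y (Aux.Lclm a (τ y)) = 0 := by
      intro y hyG hyU
      have hyΓ : y ∈ Γ := by
        by_contra hy
        exact hyG (subset_toMeasurable _ _ hy)
      have hspan : Aux.Lclm a (τ y) ∈ MV.spanSet k (τ y) := ⟨a, ha, rfl⟩
      have hmem2 := hyΓ.2 hspan
      rw [hωker y hyU] at hmem2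
      exact LinearMap.mem_ker.1 (Submodule.mem_iInf _ |>.1 hmem2 j)
    have hsd' : ∀ ε : ℝ, 0 < ε → ∃ r₀ > (0:ℝ), ∀ r, 0 < r → r < r₀ →
        totalVar τ μ (closedBall x r \ (toMeasurable lam Γᶜ)ᶜ)
          ≤ ENNReal.ofReal ε * totalVar τ μ (closedBall x r) :=
      fun ε hε => Aux.sd_closedBall hτi hsd hε
    have hk := Aux.key hτm hτi hG hUopen hωcont hzero hxU hx1 hx2 hsd'
    simpa [Aux.Lclm_apply] using hk
  rw [hωker x hxU]
  exact hmem
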